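/- Let ℓ ≥ 1 be an integer, let m = ⌊log₂ ℓ⌋, and let Q = {2^0, 2^1, …, 2^m}, which is a level subset of {1, …, ℓ} since 2^m ≤ ℓ. Then for every feasible vector y one has val(Q, y) ≤ 4; that is, writing i_k = 2^{k−1} for 1 ≤ k ≤ m+1 and i_{m+2} = ℓ+1, the inequality Σ_{k=1}^{m+1} (i_{k+1} − 1)·y_{i_k} ≤ 4 holds for every feasible y. -/
import Mathlib


/-- A vector `y` (indexed `1, …, ℓ`) is feasible if it is nonincreasing, nonnegative,
and sums to 1. -/
def Feasible (ℓ : ℕ) (y : ℕ → ℝ) : Prop :=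
  (∀ i ∈ Finset.Icc 1 ℓ, ∀ j ∈ Finset.Icc 1 ℓ, i ≤ j → y j ≤ y i) ∧
  (∀ i ∈ Finset.Icc 1 ℓ, 0 ≤ y i) ∧
  (∑ i ∈ Finset.Icc 1 ℓ, y i = 1)

/-- `Q` is a level subset of `{1, …, ℓ}` if `Q ⊆ {1, …, ℓ}` and `1 ∈ Q`. -/
def IsLevelSubset (ℓ : ℕ) (Q : Finset ℕ) : Prop :=
  Q ⊆ Finset.Icc 1 ℓ ∧ 1 ∈ Q

/-- The successor of `i` in the level subset `Q`: the smallest element of `Q` larger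
than `i`, with the convention that it is `ℓ + 1` if there is none. -/
def nextLevel (ℓ : ℕ) (Q : Finset ℕ) (i : ℕ) : ℕ :=
  if h : (Q.filter (fun j => i < j)).Nonempty then (Q.filter (fun j => i < j)).min' h
  else ℓ + 1

/-- `val(Q, y) = Σ_{k=1}^m (i_{k+1} − 1)·y_{i_k}`. -/
def lval (ℓ : ℕ) (Q : Finset ℕ) (y : ℕ → ℝ) : ℝ :=
  ∑ i ∈ Q, ((nextLevel ℓ Q i : ℝ) - 1) * y i

/-- For the powers-of-two level subset `Q = {2^0, 2^1, …, 2^⌊log₂ ℓ⌋}`, one has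
`val(Q, y) ≤ 4` for every feasible `y` (the 4-approximation of Charikar et al.). -/
theorem stmt_8 (ℓ : ℕ) (hℓ : 1 ≤ ℓ) :
    IsLevelSubset ℓ ((Finset.range (Nat.log 2 ℓ + 1)).image (fun k => 2 ^ k)) ∧
    ∀ y : ℕ → ℝ, Feasible ℓ y →
      lval ℓ ((Finset.range (Nat.log 2 ℓ + 1)).image (fun k => 2 ^ k)) y ≤ 4 := by
  set m := Nat.log 2 ℓ with hm
  set Q := (Finset.range (m + 1)).image (fun k => 2 ^ k) with hQ
  have hpow : 2 ^ m ≤ ℓ := Nat.pow_log_le_self 2 (by omega)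
  have hlt : ℓ < 2 ^ (m + 1) := Nat.lt_pow_succ_log_self (by norm_num) ℓ
  have hQsub : ∀ x ∈ Q, ∃ k, k ≤ m ∧ x = 2 ^ k := by
    intro x hx
    simp only [hQ, Finset.mem_image, Finset.mem_range] at hx
    obtain ⟨k, hk, rfl⟩ := hx
    exact ⟨k, by omega, rfl⟩
  have hmemQ : ∀ k, k ≤ m → 2 ^ k ∈ Q := by
    intro k hk
    simp only [hQ, Finset.mem_image, Finset.mem_range]
    exact ⟨k, by omega, rfl⟩
  have hQIcc : Q ⊆ Finset.Icc 1 ℓ := by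
    intro x hx
    obtain ⟨k, hk, rfl⟩ := hQsub x hx
    rw [Finset.mem_Icc]
    exact ⟨Nat.one_le_two_pow,
      le_trans (Nat.pow_le_pow_right (by norm_num) hk) hpow⟩
  refine ⟨⟨hQIcc, hmemQ 0 (Nat.zero_le _)⟩, ?_⟩
  intro y hy
  obtain ⟨hmono, hnonneg, hsum⟩ := hy
  have hnext : ∀ k, k ≤ m → nextLevel ℓ Q (2 ^ k) ≤ 2 ^ (k + 1) := by
    intro k hk
    unfold nextLevel
    split_ifs with h
    · rcases Nat.lt_or_ge k m with hkm | hkm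
      · exact Finset.min'_le _ _ (Finset.mem_filter.mpr ⟨hmemQ (k + 1) (by omega),
          Nat.pow_lt_pow_right (by norm_num) (by omega)⟩)
      · exfalso
        obtain ⟨x, hx⟩ := h
        rw [Finset.mem_filter] at hx
        obtain ⟨j, hj, rfl⟩ := hQsub x hx.1
        have hkm' : k = m := le_antisymm hk hkm
        subst hkm'
        have h2 : 2 ^ j ≤ 2 ^ m := Nat.pow_le_pow_right (by norm_num) hj
        have h3 := hx.2
        omega
    · have : 2 ^ (m + 1) ≤ 2 ^ (k + 1) := by
        rcases Nat.lt_or_ge k m with hkm | hkm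
        · exact absurd ⟨2 ^ (k + 1), Finset.mem_filter.mpr ⟨hmemQ (k + 1) (by omega),
            Nat.pow_lt_pow_right (by norm_num) (by omega)⟩⟩ h
        · exact Nat.pow_le_pow_right (by norm_num) (by omega)
      omega
  have hyQ : ∀ k, k ≤ m → 0 ≤ y (2 ^ k) := fun k hk => hnonneg _ (hQIcc (hmemQ k hk))
  have hy1 : 0 ≤ y 1 := hnonneg 1 (Finset.mem_Icc.mpr ⟨le_refl 1, hℓ⟩)
  have hlval : lval ℓ Q y ≤ ∑ k ∈ Finset.range (m + 1), (2 : ℝ) ^ (k + 1) * y (2 ^ k) := by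
    unfold lval
    rw [hQ, Finset.sum_image (by
      intro a _ b _ hab
      exact Nat.pow_right_injective (le_refl 2) hab)]
    apply Finset.sum_le_sum
    intro k hk
    rw [Finset.mem_range] at hk
    have h1 := hnext k (by omega)
    have h2 := hyQ k (by omega)
    have h3 : ((nextLevel ℓ Q (2 ^ k) : ℝ)) - 1 ≤ 2 ^ (k + 1) := by
      have : (nextLevel ℓ Q (2 ^ k) : ℝ) ≤ ((2 ^ (k + 1) : ℕ) : ℝ) := by exact_mod_cast h1
      push_cast at this
      linarith
    nlinarith [h2, h3]
  have hioc : ∀ n : ℕ, ∑ k ∈ Finset.range n, ∑ j ∈ Finset.Ioc (2 ^ k) (2 ^ (k + 1)), y j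
      = ∑ j ∈ Finset.Ioc 1 (2 ^ n), y j := by
    intro n
    induction n with
    | zero => simp
    | succ n ih =>
      rw [Finset.sum_range_succ, ih, Finset.sum_Ioc_consecutive]
      · exact Nat.one_le_two_pow
      · exact Nat.pow_le_pow_right (by norm_num) (by omega)
  have hterm : ∀ k, k < m →
      (2 : ℝ) ^ (k + 2) * y (2 ^ (k + 1)) ≤ 4 * ∑ j ∈ Finset.Ioc (2 ^ k) (2 ^ (k + 1)), y j := by
    intro k hk
    have hcard : (Finset.Ioc (2 ^ k) (2 ^ (k + 1))).card = 2 ^ k := by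
      rw [Nat.card_Ioc]
      have : 2 ^ (k + 1) = 2 * 2 ^ k := by ring
      omega
    have hub : 2 ^ (k + 1) ≤ ℓ :=
      le_trans (Nat.pow_le_pow_right (by norm_num) (by omega)) hpow
    have hle : ∀ j ∈ Finset.Ioc (2 ^ k) (2 ^ (k + 1)), y (2 ^ (k + 1)) ≤ y j := by
      intro j hj
      rw [Finset.mem_Ioc] at hj
      have h1 : (1 : ℕ) ≤ 2 ^ k := Nat.one_le_two_pow
      apply hmono j (Finset.mem_Icc.mpr ⟨by omega, by omega⟩)
        (2 ^ (k + 1)) (Finset.mem_Icc.mpr ⟨Nat.one_le_two_pow, hub⟩) hj.2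
    have hms := Finset.card_nsmul_le_sum (Finset.Ioc (2 ^ k) (2 ^ (k + 1))) y (y (2 ^ (k + 1))) hle
    rw [hcard, nsmul_eq_mul] at hms
    push_cast at hms
    have he : (2 : ℝ) ^ (k + 2) = 4 * 2 ^ k := by ring
    rw [he]
    nlinarith [hms]
  have hmain : ∑ k ∈ Finset.range (m + 1), (2 : ℝ) ^ (k + 1) * y (2 ^ k)
      ≤ 4 * ∑ j ∈ Finset.Icc 1 (2 ^ m), y j := by
    rw [Finset.sum_range_succ']
    have h1 : ∑ k ∈ Finset.range m, (2 : ℝ) ^ (k + 1 + 1) * y (2 ^ (k + 1))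
        ≤ ∑ k ∈ Finset.range m, 4 * ∑ j ∈ Finset.Ioc (2 ^ k) (2 ^ (k + 1)), y j := by
      apply Finset.sum_le_sum
      intro k hk
      rw [Finset.mem_range] at hk
      exact hterm k hk
    rw [← Finset.mul_sum, hioc] at h1
    have h2 : Finset.Icc 1 (2 ^ m) = (Finset.Ioc 1 (2 ^ m)).cons 1 (by simp) := by
      exact Finset.Icc_eq_cons_Ioc Nat.one_le_two_pow
    rw [h2, Finset.sum_cons]
    simp only [pow_zero] at *
    norm_num
    linarith
  have hfin : ∑ j ∈ Finset.Icc 1 (2 ^ m), y j ≤ 1 := by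
    rw [← hsum]
    apply Finset.sum_le_sum_of_subset_of_nonneg
    · exact Finset.Icc_subset_Icc_right hpow
    · intro i hi _
      exact hnonneg i hi
  linarith
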